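/- Let A be a finite set of action schemata whose arities are at most N, let P be a finite set of predicates whose arities are at most M, and fix k ∈ ℕ. Every pair consisting of a single goal fact and a length-k sequence of ground actions (each ground action being a schema from A instantiated with objects from an infinite universe O) mentions at most kN + M distinct objects, and is object-renaming equivalent (via some bijection of O) to such a pair whose objects all lie in a fixed subset of O of size kN + M. Consequently the number of such pairs up to object-renaming equivalence, over sequence lengths k = 0,…,C, is at most |P| · M^M · Σ_{k=0}^{C} (|A| · (kN + M)^N)^k. -/

import Mathlib

/-!
STATEMENT 13: Let A be a finite set of action schemata with arities ≤ N, P a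
finite set of predicates with arities ≤ M, and fix k. Every pair of a single
goal fact and a length-k sequence of ground actions over an infinite universe
O mentions at most kN + M distinct objects, and is object-renaming equivalent
to such a pair whose objects all lie in a fixed subset of O of size kN + M.
Consequently the number of such pairs up to object-renaming equivalence, over
sequence lengths k = 0,…,C, is at most
|P| · M^M · Σ_{k=0}^{C} (|A| · (kN + M)^N)^k.
-/

namespace Bison

/-- A fact is a predicate symbol together with a list of objects of the
predicate's arity. -/
def HLFact (P O : Type*) (ar : P → ℕ) : Type _ := (p : P) × (Fin (ar p) → O)

/-- A ground action: an action schema together with a list of argument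
objects of the schema's arity. -/
def GAction (A O : Type*) (arA : A → ℕ) : Type _ := (a : A) × (Fin (arA a) → O)

variable {P A O : Type*} {ar : P → ℕ} {arA : A → ℕ}

/-- The lifted map of a bijection `f : O ≃ O` on facts. -/
def liftFact (f : O ≃ O) (φ : HLFact P O ar) : HLFact P O ar :=
  ⟨φ.1, fun i => f (φ.2 i)⟩

/-- The lifted map of a bijection `f : O ≃ O` on ground actions. -/
def liftGAction (f : O ≃ O) (α : GAction A O arA) : GAction A O arA :=
  ⟨α.1, fun i => f (α.2 i)⟩

/-- The set of objects mentioned by a pair of a goal fact and a length-`k`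
ground action sequence. -/
def mentions (k : ℕ) (φ : HLFact P O ar) (as : Fin k → GAction A O arA) :
    Set O :=
  Set.range φ.2 ∪ ⋃ t : Fin k, Set.range (as t).2

/-- Object-renaming equivalence of (goal fact, ground action sequence)
pairs: some bijection of `O` maps the argument objects of one componentwise
onto those of the other. -/
def PairEquiv (k : ℕ) (φ φ' : HLFact P O ar)
    (as as' : Fin k → GAction A O arA) : Prop :=
  ∃ f : O ≃ O, liftFact f φ = φ' ∧ ∀ t : Fin k, liftGAction f (as t) = as' t

lemma ncard_range_le' {α β : Type*} [Fintype α] (f : α → β) :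
    (Set.range f).ncard ≤ Fintype.card α := by
  classical
  rw [← Set.image_univ]
  calc (f '' Set.univ).ncard ≤ (Set.univ : Set α).ncard :=
        Set.ncard_image_le Set.finite_univ
    _ = Fintype.card α := by rw [Set.ncard_univ, Nat.card_eq_fintype_card]

lemma exists_perm_subset [Infinite O] [DecidableEq O] (s₁ s : Set O) (hsub : s₁ ⊆ s)
    (hs : s.Finite)
    (T₁ T : Finset O) (hT : T₁ ⊆ T) (h₁ : s₁.ncard ≤ T₁.card)
    (h₂ : (s \ s₁).ncard ≤ (T \ T₁).card) :
    ∃ g : O ≃ O, (∀ x ∈ s₁, g x ∈ T₁) ∧ (∀ x ∈ s, g x ∈ T) := by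
  classical
  have hs₁ : s₁.Finite := hs.subset hsub
  have hd : (s \ s₁).Finite := hs.diff
  haveI := hs₁.fintype
  haveI := hd.fintype
  have c1 : Fintype.card s₁ ≤ Fintype.card T₁ := by
    rw [← Nat.card_eq_fintype_card, Nat.card_coe_set_eq, Fintype.card_coe]
    exact h₁
  have c2 : Fintype.card ↥(s \ s₁) ≤ Fintype.card ↥(T \ T₁) := by
    rw [← Nat.card_eq_fintype_card, Nat.card_coe_set_eq, Fintype.card_coe]
    exact h₂
  obtain ⟨j₁⟩ := Function.Embedding.nonempty_of_card_le c1
  obtain ⟨j₂⟩ := Function.Embedding.nonempty_of_card_le c2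
  have hj₂ : ∀ x, (j₂ x : O) ∉ T₁ := fun x =>
    (Finset.mem_sdiff.mp (j₂ x).2).2
  set F : s → O := fun x =>
    if h : (x : O) ∈ s₁ then (j₁ ⟨x, h⟩ : O) else (j₂ ⟨x, ⟨x.2, h⟩⟩ : O) with hF
  have hFinj : Function.Injective F := by
    rintro ⟨x, hx⟩ ⟨y, hy⟩ hxy
    simp only [hF] at hxy
    by_cases h1 : x ∈ s₁ <;> by_cases h2 : y ∈ s₁ <;>
      simp only [h1, h2, dif_pos, dif_neg, not_false_iff] at hxy
    · have := j₁.injective (Subtype.coe_injective hxy)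
      simpa using this
    · exact absurd (hxy ▸ (j₁ ⟨x, h1⟩).2) (hj₂ _)
    · exact absurd (hxy.symm ▸ (j₁ ⟨y, h2⟩).2) (hj₂ _)
    · have := j₂.injective (Subtype.coe_injective hxy)
      exact Subtype.ext (Subtype.mk.inj this)
  have hslt : (Cardinal.mk s) < Cardinal.mk O := by
    haveI := hs.to_subtype
    exact lt_of_lt_of_le (Cardinal.lt_aleph0_of_finite _) (Cardinal.aleph0_le_mk O)
  obtain ⟨g, hg⟩ := Cardinal.extend_function_of_lt ⟨F, hFinj⟩ hslt ⟨Equiv.refl O⟩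
  refine ⟨g, fun x hx => ?_, fun x hx => ?_⟩
  · have := hg ⟨x, hsub hx⟩
    simp only [Function.Embedding.coeFn_mk, hF, dif_pos hx] at this
    rw [this]
    exact (j₁ ⟨x, hx⟩).2
  · have := hg ⟨x, hx⟩
    simp only [Function.Embedding.coeFn_mk, hF] at this
    rw [this]
    by_cases h1 : x ∈ s₁
    · simp only [dif_pos h1]
      exact hT (j₁ ⟨x, h1⟩).2
    · simp only [dif_neg h1]
      exact (Finset.mem_sdiff.mp (j₂ ⟨x, ⟨hx, h1⟩⟩).2).1

/-- For finite `A` with schema arities ≤ `N`, finite `P` with predicate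
arities ≤ `M`, and infinite `O`:
(1) every pair of a goal fact and a length-`k` ground action sequence
mentions at most `kN + M` distinct objects;
(2) given any fixed subset `T` of `O` of size `kN + M`, every such pair is
object-renaming equivalent to a pair whose objects all lie in `T`; and
(3) over sequence lengths `k = 0, …, C`, there is a family of finite sets of
pairs meeting every equivalence class, of total cardinality at most
`|P| · M^M · Σ_{k=0}^{C} (|A| · (kN + M)^N)^k`. -/
theorem pairs_up_to_renaming_finite [Fintype A] [Fintype P] [Infinite O]
    (N M C : ℕ) (harA : ∀ a : A, arA a ≤ N) (har : ∀ p : P, ar p ≤ M) :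
    (∀ (k : ℕ) (φ : HLFact P O ar) (as : Fin k → GAction A O arA),
      (mentions k φ as).Finite ∧ (mentions k φ as).ncard ≤ k * N + M) ∧
    (∀ (k : ℕ) (φ : HLFact P O ar) (as : Fin k → GAction A O arA)
      (T : Finset O), T.card = k * N + M →
      ∃ f : O ≃ O,
        mentions k (liftFact f φ) (fun t => liftGAction f (as t)) ⊆ ↑T) ∧
    (∃ S : (k : Fin (C + 1)) →
        Set (HLFact P O ar × (Fin (k : ℕ) → GAction A O arA)),
      (∀ k, (S k).Finite) ∧
      (∑ k : Fin (C + 1), (S k).ncard) ≤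
        Fintype.card P * M ^ M *
          ∑ k ∈ Finset.range (C + 1),
            (Fintype.card A * (k * N + M) ^ N) ^ k ∧
      ∀ (k : Fin (C + 1)) (φ : HLFact P O ar)
        (as : Fin (k : ℕ) → GAction A O arA),
        ∃ pr ∈ S k, PairEquiv (k : ℕ) φ pr.1 as pr.2) := by
  classical
  -- basic finiteness and cardinality facts
  have hfin : ∀ (k : ℕ) (φ : HLFact P O ar) (as : Fin k → GAction A O arA),
      (mentions k φ as).Finite := by
    intro k φ as
    exact (Set.finite_range _).union (Set.finite_iUnion fun t => Set.finite_range _)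
  have hUfin : ∀ (k : ℕ) (as : Fin k → GAction A O arA),
      (⋃ t : Fin k, Set.range (as t).2).Finite :=
    fun k as => Set.finite_iUnion fun t => Set.finite_range _
  have hb1 : ∀ φ : HLFact P O ar, (Set.range φ.2).ncard ≤ M := fun φ =>
    le_trans (ncard_range_le' _) (by simpa using har φ.1)
  have hb2 : ∀ (k : ℕ) (as : Fin k → GAction A O arA),
      (⋃ t : Fin k, Set.range (as t).2).ncard ≤ k * N := by
    intro k as
    have hrange : (⋃ t : Fin k, Set.range (as t).2) =
        Set.range (fun x : (Σ t : Fin k, Fin (arA (as t).1)) => (as x.1).2 x.2) := by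
      ext y
      simp only [Set.mem_iUnion, Set.mem_range, Sigma.exists]
    rw [hrange]
    refine le_trans (ncard_range_le' _) ?_
    rw [Fintype.card_sigma]
    calc ∑ t : Fin k, Fintype.card (Fin (arA (as t).1)) ≤ ∑ _t : Fin k, N := by
          refine Finset.sum_le_sum fun t _ => ?_
          simpa using harA (as t).1
      _ = k * N := by simp [Finset.sum_const, mul_comm]
  have part1 : ∀ (k : ℕ) (φ : HLFact P O ar) (as : Fin k → GAction A O arA),
      (mentions k φ as).Finite ∧ (mentions k φ as).ncard ≤ k * N + M := by
    intro k φ as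
    refine ⟨hfin k φ as, ?_⟩
    have := Set.ncard_union_le (Set.range φ.2) (⋃ t : Fin k, Set.range (as t).2)
    have h1 := hb1 φ
    have h2 := hb2 k as
    unfold mentions
    omega
  have hlift : ∀ (k : ℕ) (g : O ≃ O) (φ : HLFact P O ar)
      (as : Fin k → GAction A O arA),
      mentions k (liftFact g φ) (fun t => liftGAction g (as t)) =
        g '' mentions k φ as := by
    intro k g φ as
    show Set.range (fun i => g (φ.2 i)) ∪
        (⋃ t : Fin k, Set.range (fun i => g ((as t).2 i))) =
      g '' (Set.range φ.2 ∪ ⋃ t : Fin k, Set.range (as t).2)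
    rw [Set.image_union, Set.image_iUnion]
    congr 1
    · exact Set.range_comp g φ.2
    · exact Set.iUnion_congr fun t => Set.range_comp g (as t).2
  refine ⟨part1, ?_, ?_⟩
  · -- part 2
    intro k φ as T hT
    obtain ⟨g, -, hg⟩ := exists_perm_subset (mentions k φ as) (mentions k φ as)
      subset_rfl (hfin k φ as) T T subset_rfl
      (by rw [hT]; exact (part1 k φ as).2)
      (by simp)
    refine ⟨g, ?_⟩
    rw [hlift]
    rintro y ⟨x, hx, rfl⟩
    exact hg x hx
  · -- part 3
    obtain ⟨T0, hT0⟩ := Infinite.exists_subset_card_eq O M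
    have hch : ∀ k : ℕ, ∃ t : Finset O, T0 ⊆ t ∧ t.card = k * N + M :=
      fun k => Infinite.exists_superset_card_eq T0 _ (by omega)
    choose Tk hTk1 hTk2 using hch
    refine ⟨fun k => Set.range (fun x : ((p : P) × (Fin (ar p) → ↥T0)) ×
      (Fin (k : ℕ) → (a : A) × (Fin (arA a) → ↥(Tk (k : ℕ)))) =>
      ((⟨x.1.1, fun i => (x.1.2 i : O)⟩ : HLFact P O ar),
        fun t => (⟨(x.2 t).1, fun i => ((x.2 t).2 i : O)⟩ : GAction A O arA))),
      fun k => Set.finite_range _, ?_, ?_⟩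
    · -- cardinality bound
      have hcard : ∀ k : Fin (C + 1),
          (Set.range (fun x : ((p : P) × (Fin (ar p) → ↥T0)) ×
            (Fin (k : ℕ) → (a : A) × (Fin (arA a) → ↥(Tk (k : ℕ)))) =>
            ((⟨x.1.1, fun i => (x.1.2 i : O)⟩ : HLFact P O ar),
              fun t => (⟨(x.2 t).1, fun i => ((x.2 t).2 i : O)⟩ :
                GAction A O arA)))).ncard ≤
          Fintype.card P * M ^ M *
            (Fintype.card A * ((k : ℕ) * N + M) ^ N) ^ (k : ℕ) := by
        intro k
        refine le_trans (ncard_range_le' _) ?_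
        rw [Fintype.card_prod, Fintype.card_sigma]
        have hP : ∑ p : P, Fintype.card (Fin (ar p) → ↥T0) ≤
            Fintype.card P * M ^ M := by
          calc ∑ p : P, Fintype.card (Fin (ar p) → ↥T0)
              ≤ ∑ _p : P, M ^ M := by
                refine Finset.sum_le_sum fun p _ => ?_
                rw [Fintype.card_fun, Fintype.card_coe, hT0, Fintype.card_fin]
                rcases Nat.eq_zero_or_pos M with hM | hM
                · have hap := har p
                  have : ar p = 0 := by omega
                  simp [this, hM]
                · exact Nat.pow_le_pow_right hM (har p)
            _ = Fintype.card P * M ^ M := by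
                simp [Finset.sum_const, Finset.card_univ, mul_comm]
        have hA : Fintype.card (Fin (k : ℕ) →
            (a : A) × (Fin (arA a) → ↥(Tk (k : ℕ)))) ≤
            (Fintype.card A * ((k : ℕ) * N + M) ^ N) ^ (k : ℕ) := by
          rw [Fintype.card_fun, Fintype.card_fin, Fintype.card_sigma]
          rcases Nat.eq_zero_or_pos (k : ℕ) with hk | hk
          · simp [hk]
          refine Nat.pow_le_pow_left ?_ _
          calc ∑ a : A, Fintype.card (Fin (arA a) → ↥(Tk (k : ℕ)))
              ≤ ∑ _a : A, ((k : ℕ) * N + M) ^ N := by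
                refine Finset.sum_le_sum fun a _ => ?_
                rw [Fintype.card_fun, Fintype.card_coe, hTk2, Fintype.card_fin]
                rcases Nat.eq_zero_or_pos ((k : ℕ) * N + M) with h0 | h0
                · have hN : N = 0 := by
                    have h00 : (k : ℕ) * N = 0 := by omega
                    rcases Nat.mul_eq_zero.mp h00 with h | h
                    · omega
                    · exact h
                  have haa := harA a
                  have : arA a = 0 := by omega
                  simp [this, hN]
                · exact Nat.pow_le_pow_right h0 (harA a)
            _ = Fintype.card A * ((k : ℕ) * N + M) ^ N := by
                simp [Finset.sum_const, Finset.card_univ, mul_comm]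
        calc (∑ p : P, Fintype.card (Fin (ar p) → ↥T0)) *
              Fintype.card (Fin (k : ℕ) →
                (a : A) × (Fin (arA a) → ↥(Tk (k : ℕ))))
            ≤ (Fintype.card P * M ^ M) *
              (Fintype.card A * ((k : ℕ) * N + M) ^ N) ^ (k : ℕ) :=
              Nat.mul_le_mul hP hA
          _ = _ := rfl
      calc (∑ k : Fin (C + 1), (Set.range _).ncard)
          ≤ ∑ k : Fin (C + 1), Fintype.card P * M ^ M *
              (Fintype.card A * ((k : ℕ) * N + M) ^ N) ^ (k : ℕ) :=
            Finset.sum_le_sum fun k _ => hcard k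
        _ = Fintype.card P * M ^ M *
              ∑ k ∈ Finset.range (C + 1),
                (Fintype.card A * (k * N + M) ^ N) ^ k := by
            rw [Finset.mul_sum, Fin.sum_univ_eq_sum_range
              (fun k => Fintype.card P * M ^ M *
                (Fintype.card A * (k * N + M) ^ N) ^ k)]
    · -- covering
      intro k φ as
      have hsub : Set.range φ.2 ⊆ mentions (k : ℕ) φ as := Set.subset_union_left
      have hdiffcard : ((Tk (k : ℕ)) \ T0).card = (k : ℕ) * N := by
        rw [Finset.card_sdiff_of_subset (hTk1 _), hTk2, hT0]
        omega
      obtain ⟨g, hg1, hg2⟩ := exists_perm_subset (Set.range φ.2)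
        (mentions (k : ℕ) φ as) hsub (hfin _ φ as) T0 (Tk (k : ℕ)) (hTk1 _)
        (by rw [hT0]; exact hb1 φ)
        (by
          rw [hdiffcard]
          refine le_trans (Set.ncard_le_ncard ?_ (hUfin _ as)) (hb2 _ as)
          unfold mentions
          rw [Set.union_diff_left]
          exact Set.diff_subset)
      refine ⟨(liftFact g φ, fun t => liftGAction g (as t)), ?_, g, rfl, fun t => rfl⟩
      exact ⟨(⟨φ.1, fun i => ⟨g (φ.2 i), hg1 _ (Set.mem_range_self i)⟩⟩,
        fun t => ⟨(as t).1, fun i => ⟨g ((as t).2 i),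
          hg2 _ (Set.mem_union_right _ (Set.mem_iUnion.mpr
            ⟨t, Set.mem_range_self i⟩))⟩⟩), rfl⟩


end Bison
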